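/- arXiv:1908.06118 — 4 statements merged into one kernel-verified Lean document; each statement's English description precedes it below -/
import Mathlib

section
/- If p is an ε-projection of x onto C, then for any y ∈ ℝⁿ, ‖p - P_C(y)‖ ≤ ‖x - y‖ + √ε, where P_C(y) is the exact orthogonal projection of y onto C. -/
open Metric RealInnerProductSpace

theorem eps_projection_quasi_nonexpansive {n : ℕ}
    (C : Set (EuclideanSpace ℝ (Fin n)))
    (hCne : C.Nonempty) (hCclosed : IsClosed C) (hCconv : Convex ℝ C)
    (x y p q : EuclideanSpace ℝ (Fin n)) (ε : ℝ) (hε : 0 ≤ ε)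
    (hp : p ∈ C) (hpε : ∀ z ∈ C, ⟪x - p, z - p⟫ ≤ ε)
    (hq : q ∈ C) (hqproj : ∀ z ∈ C, ⟪y - q, z - q⟫ ≤ (0 : ℝ)) :
    ‖p - q‖ ≤ ‖x - y‖ + Real.sqrt ε := by
  have h1 : ⟪x - p, q - p⟫ ≤ ε := hpε q hq
  have h2 : ⟪y - q, p - q⟫ ≤ 0 := hqproj p hp
  have h3 : ⟪x - y, p - q⟫ ≤ ‖x - y‖ * ‖p - q‖ := real_inner_le_norm _ _
  have hsum : ⟪p - q, p - q⟫ = ⟪x - p, q - p⟫ + ⟪x - y, p - q⟫ + ⟪y - q, p - q⟫ := by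
    simp only [inner_sub_left, inner_sub_right, real_inner_comm p q, real_inner_comm x p,
      real_inner_comm x q, real_inner_comm y p, real_inner_comm y q]
    ring
  have hkey : ‖p - q‖ ^ 2 ≤ ε + ‖x - y‖ * ‖p - q‖ := by
    rw [← real_inner_self_eq_norm_sq, hsum]
    linarith
  have hs : Real.sqrt ε ^ 2 = ε := Real.sq_sqrt hε
  have hs0 : 0 ≤ Real.sqrt ε := Real.sqrt_nonneg ε
  have ht0 : 0 ≤ ‖p - q‖ := norm_nonneg _
  have ha0 : 0 ≤ ‖x - y‖ := norm_nonneg _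
  by_contra hcon
  push_neg at hcon
  nlinarith [mul_pos (sub_pos.mpr hcon) (add_pos_of_nonneg_of_pos ht0 (lt_of_le_of_lt (by linarith) hcon))]
end

section
/- Suppose d_k satisfies ‖d_k‖ ≤ c₁·dist(x_k, C*), the error bound ω·dist(x,C*) ≤ ‖F(x)‖ holds on B(x*, δ), ‖F(x_k)+F'(x_k)d_k‖ ≤ c₂·dist(x_k,C*)², the quadratic estimate ‖F(x_k + d_k) - F(x_k) - F'(x_k)d_k‖ ≤ (L/2)‖d_k‖² holds, and x_{k+1} is an ε_k-projection of x_k + d_k onto C with ε_k = θ_k²‖d_k‖². If x_k, x_k + d_k ∈ B(x*, δ/2), then dist(x_{k+1}, C*) ≤ θ_k c₁ dist(x_k, C*) + ((2c₂ + Lc₁²)/(2ω)) dist(x_k, C*)². -/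
open Metric RealInnerProductSpace

theorem dist_recursion {n m : ℕ}
    (C Cs : Set (EuclideanSpace ℝ (Fin n)))
    (hCne : C.Nonempty) (hCclosed : IsClosed C) (hCconv : Convex ℝ C)
    (F : EuclideanSpace ℝ (Fin n) → EuclideanSpace ℝ (Fin m))
    (F' : EuclideanSpace ℝ (Fin n) →
      (EuclideanSpace ℝ (Fin n) →L[ℝ] EuclideanSpace ℝ (Fin m)))
    (hCs : Cs = {x ∈ C | F x = 0}) (hCsne : Cs.Nonempty)
    (ω L c₁ c₂ δ θ : ℝ)
    (hω : 0 < ω) (hL : 0 < L) (hc₁ : 0 < c₁) (hc₂ : 0 < c₂) (hδ : 0 < δ)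
    (hθ : 0 ≤ θ)
    (xstar xk dk xk1 : EuclideanSpace ℝ (Fin n)) (hxstar : xstar ∈ Cs)
    (heb : ∀ x ∈ closedBall xstar δ, ω * infDist x Cs ≤ ‖F x‖)
    (hdk : ‖dk‖ ≤ c₁ * infDist xk Cs)
    (hres : ‖F xk + F' xk dk‖ ≤ c₂ * (infDist xk Cs) ^ 2)
    (hquad : ‖F (xk + dk) - F xk - F' xk dk‖ ≤ L / 2 * ‖dk‖ ^ 2)
    (hprojmem : xk1 ∈ C)
    (hproj : ∀ y ∈ C, ⟪(xk + dk) - xk1, y - xk1⟫ ≤ θ ^ 2 * ‖dk‖ ^ 2)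
    (hball1 : xk ∈ closedBall xstar (δ / 2))
    (hball2 : xk + dk ∈ closedBall xstar (δ / 2)) :
    infDist xk1 Cs ≤ θ * c₁ * infDist xk Cs +
      ((2 * c₂ + L * c₁ ^ 2) / (2 * ω)) * (infDist xk Cs) ^ 2 := by
  set d := infDist xk Cs with hdDef
  have hd0 : 0 ≤ d := infDist_nonneg
  set z := xk + dk with hz
  -- Step A: per-point bound
  have stepA : ∀ y ∈ Cs, dist xk1 y ≤ dist z y + θ * ‖dk‖ := by
    intro y hy
    have hyC : y ∈ C := by rw [hCs] at hy; exact hy.1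
    have h1 : ⟪z - xk1, y - xk1⟫ ≤ θ ^ 2 * ‖dk‖ ^ 2 := hproj y hyC
    have e0 : ⟪xk1 - z, xk1 - y⟫ = ⟪z - xk1, y - xk1⟫ := by
      rw [← inner_neg_neg (𝕜 := ℝ)]; simp [neg_sub]
    have expand : ⟪xk1 - y, xk1 - y⟫ =
        ⟪xk1 - z, xk1 - y⟫ + ⟪z - y, xk1 - y⟫ := by
      rw [← inner_add_left, sub_add_sub_cancel]
    have e2 : ⟪z - y, xk1 - y⟫ ≤ ‖z - y‖ * ‖xk1 - y‖ := real_inner_le_norm _ _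
    have key : ‖xk1 - y‖ ^ 2 ≤ θ ^ 2 * ‖dk‖ ^ 2 + ‖z - y‖ * ‖xk1 - y‖ := by
      rw [← real_inner_self_eq_norm_sq]
      rw [expand, e0]; linarith
    have ht : 0 ≤ ‖xk1 - y‖ := norm_nonneg _
    have ha : 0 ≤ ‖z - y‖ := norm_nonneg _
    have hb : 0 ≤ θ * ‖dk‖ := mul_nonneg hθ (norm_nonneg _)
    have : ‖xk1 - y‖ ≤ ‖z - y‖ + θ * ‖dk‖ := by
      by_contra hcon
      push_neg at hcon
      have h2 : θ * ‖dk‖ < ‖xk1 - y‖ := by linarith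
      nlinarith [mul_lt_mul_of_pos_right (show ‖z - y‖ + θ * ‖dk‖ < ‖xk1 - y‖ from hcon) (lt_of_le_of_lt hb h2)]
    simpa [dist_eq_norm] using this
  -- Step B
  have stepB : infDist xk1 Cs ≤ infDist z Cs + θ * ‖dk‖ := by
    by_contra hcon
    push_neg at hcon
    have h4 : infDist z Cs < infDist xk1 Cs - θ * ‖dk‖ := by linarith
    obtain ⟨y, hy, hylt⟩ := (infDist_lt_iff hCsne).1 h4
    have h3 : infDist xk1 Cs ≤ dist xk1 y := infDist_le_dist_of_mem hy
    have := stepA y hy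
    linarith
  -- Step C
  have hmem : z ∈ closedBall xstar δ := by
    have := mem_closedBall.1 hball2
    exact mem_closedBall.2 (by linarith)
  have stepC : ω * infDist z Cs ≤ ‖F z‖ := heb z hmem
  -- Step D
  have triD : ‖F z‖ ≤ L / 2 * ‖dk‖ ^ 2 + c₂ * d ^ 2 := by
    have : F z = (F z - F xk - F' xk dk) + (F xk + F' xk dk) := by abel
    calc ‖F z‖ = ‖(F z - F xk - F' xk dk) + (F xk + F' xk dk)‖ := by rw [← this]
      _ ≤ ‖F z - F xk - F' xk dk‖ + ‖F xk + F' xk dk‖ := norm_add_le _ _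
      _ ≤ L / 2 * ‖dk‖ ^ 2 + c₂ * d ^ 2 := by exact add_le_add hquad hres
  have hdksq : ‖dk‖ ^ 2 ≤ c₁ ^ 2 * d ^ 2 := by nlinarith [norm_nonneg dk]
  have stepD : ‖F z‖ ≤ (c₂ + L * c₁ ^ 2 / 2) * d ^ 2 := by nlinarith
  have hzdist : infDist z Cs ≤ (c₂ + L * c₁ ^ 2 / 2) * d ^ 2 / ω := by
    rw [le_div_iff₀ hω]
    nlinarith
  have hθd : θ * ‖dk‖ ≤ θ * c₁ * d := by
    nlinarith
  have heq : (c₂ + L * c₁ ^ 2 / 2) * d ^ 2 / ω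
      = ((2 * c₂ + L * c₁ ^ 2) / (2 * ω)) * d ^ 2 := by
    rw [div_mul_eq_mul_div, div_eq_div_iff (ne_of_gt hω) (by positivity)]
    ring
  calc infDist xk1 Cs ≤ infDist z Cs + θ * ‖dk‖ := stepB
    _ ≤ (c₂ + L * c₁ ^ 2 / 2) * d ^ 2 / ω + θ * c₁ * d := by linarith
    _ = θ * c₁ * d + ((2 * c₂ + L * c₁ ^ 2) / (2 * ω)) * d ^ 2 := by
        rw [heq]; ring
end

section
/- Under the hypotheses of the previous distance recursion, if additionally θ_k ≤ θ̄ < 1/c₁ and x_k, x_k + d_k ∈ B(x*, σ/2) where σ < min{δ, 4ω(1 - θ̄c₁)/(2c₂ + Lc₁²)}, then dist(x_{k+1}, C*) ≤ η · dist(x_k, C*) with η := θ̄c₁ + (2c₂ + Lc₁²)σ/(4ω), and η ∈ (0, 1). -/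
open Metric RealInnerProductSpace

theorem dist_linear_decrease {n m : ℕ}
    (Cs : Set (EuclideanSpace ℝ (Fin n))) (hCsne : Cs.Nonempty)
    (F : EuclideanSpace ℝ (Fin n) → EuclideanSpace ℝ (Fin m))
    (ω L c₁ c₂ δ θ θbar σ : ℝ)
    (hω : 0 < ω) (hL : 0 < L) (hc₁ : 0 < c₁) (hc₂ : 0 < c₂) (hδ : 0 < δ)
    (hθ : 0 ≤ θ) (hθθbar : θ ≤ θbar) (hθbar0 : 0 ≤ θbar)
    (hθbar : θbar < 1 / c₁)
    (hσ0 : 0 < σ) (hσδ : σ < δ)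
    (hσ : σ < 4 * ω * (1 - θbar * c₁) / (2 * c₂ + L * c₁ ^ 2))
    (xstar xk dk xk1 : EuclideanSpace ℝ (Fin n)) (hxstar : xstar ∈ Cs)
    (hball1 : xk ∈ closedBall xstar (σ / 2))
    (hball2 : xk + dk ∈ closedBall xstar (σ / 2))
    (hrec : infDist xk1 Cs ≤ θ * c₁ * infDist xk Cs +
      ((2 * c₂ + L * c₁ ^ 2) / (2 * ω)) * (infDist xk Cs) ^ 2) :
    infDist xk1 Cs ≤
        (θbar * c₁ + (2 * c₂ + L * c₁ ^ 2) * σ / (4 * ω)) * infDist xk Cs ∧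
      0 < θbar * c₁ + (2 * c₂ + L * c₁ ^ 2) * σ / (4 * ω) ∧
        θbar * c₁ + (2 * c₂ + L * c₁ ^ 2) * σ / (4 * ω) < 1 := by
  have hK : 0 < 2 * c₂ + L * c₁ ^ 2 := by positivity
  have hd0 : 0 ≤ infDist xk Cs := infDist_nonneg
  have hdσ : infDist xk Cs ≤ σ / 2 := by
    calc infDist xk Cs ≤ dist xk xstar := infDist_le_dist_of_mem hxstar
    _ ≤ σ / 2 := by simpa [Metric.mem_closedBall] using hball1
  refine ⟨?_, by positivity, ?_⟩
  · calc infDist xk1 Cs ≤ θ * c₁ * infDist xk Cs +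
        ((2 * c₂ + L * c₁ ^ 2) / (2 * ω)) * (infDist xk Cs) ^ 2 := hrec
    _ ≤ θbar * c₁ * infDist xk Cs +
        ((2 * c₂ + L * c₁ ^ 2) / (2 * ω)) * ((σ / 2) * infDist xk Cs) := by
        have h1 : θ * c₁ * infDist xk Cs ≤ θbar * c₁ * infDist xk Cs := by
          have := mul_le_mul_of_nonneg_right (mul_le_mul_of_nonneg_right hθθbar hc₁.le) hd0
          linarith
        have h2 : (infDist xk Cs) ^ 2 ≤ σ / 2 * infDist xk Cs := by
          rw [pow_two]; exact mul_le_mul_of_nonneg_right hdσ hd0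
        have h3 := mul_le_mul_of_nonneg_left h2
          (le_of_lt (div_pos hK (by positivity : (0:ℝ) < 2 * ω)))
        linarith
    _ = (θbar * c₁ + (2 * c₂ + L * c₁ ^ 2) * σ / (4 * ω)) * infDist xk Cs := by
        field_simp; ring
  · rw [lt_div_iff₀ hK] at hσ
    have : (2 * c₂ + L * c₁ ^ 2) * σ / (4 * ω) < 1 - θbar * c₁ := by
      rw [div_lt_iff₀ (by positivity : (0:ℝ) < 4 * ω)]; nlinarith
    linarith
end

section
/- Let y be an ε-projection of x - g onto C with ε = θ²‖y - x‖², x ∈ C, and θ ≤ θ̄ < 1. Then (1 - θ̄)‖y - x‖ ≤ ‖g‖, i.e., ‖d‖ ≤ ‖g‖/(1 - θ̄) where d = y - x. -/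
open RealInnerProductSpace

theorem inexact_projected_gradient_upper_bound {n : ℕ}
    (C : Set (EuclideanSpace ℝ (Fin n)))
    (hCne : C.Nonempty) (hCclosed : IsClosed C) (hCconv : Convex ℝ C)
    (x y g : EuclideanSpace ℝ (Fin n)) (θ θbar : ℝ)
    (hθ0 : 0 ≤ θ) (hθ : θ ≤ θbar) (hθbar : θbar < 1)
    (hx : x ∈ C) (hy : y ∈ C)
    (hproj : ∀ w ∈ C, ⟪(x - g) - y, w - y⟫ ≤ θ ^ 2 * ‖y - x‖ ^ 2) :
    (1 - θbar) * ‖y - x‖ ≤ ‖g‖ := by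
  have h := hproj x hx
  have hexp : ⟪(x - g) - y, x - y⟫ = ‖y - x‖ ^ 2 - ⟪g, x - y⟫ := by
    have : (x - g) - y = (x - y) - g := by abel
    rw [this, inner_sub_left, real_inner_self_eq_norm_sq, norm_sub_rev x y]
  rw [hexp] at h
  have h2 : (1 - θ ^ 2) * ‖y - x‖ ^ 2 ≤ ⟪g, x - y⟫ := by nlinarith
  have h3 : ⟪g, x - y⟫ ≤ ‖g‖ * ‖y - x‖ := by
    calc ⟪g, x - y⟫ ≤ ‖g‖ * ‖x - y‖ := real_inner_le_norm g (x - y)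
    _ = ‖g‖ * ‖y - x‖ := by rw [norm_sub_rev]
  have hθ2 : θ ^ 2 ≤ θbar := by nlinarith
  rcases eq_or_lt_of_le (norm_nonneg (y - x)) with h0 | h0
  · rw [← h0, mul_zero]; exact norm_nonneg g
  · have := h2.trans h3
    nlinarith
end
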